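/- Let T be a rooted phylogenetic X-tree whose positive edge lengths satisfy the ultrametric condition, let φ : X → ℝ, and let 1 ≤ k ≤ |X|. Construct a set A as follows: for each connected component C of T[R(d_{k⁺})], choose one leaf of C maximising φ among the leaves of C, and let P be the resulting set (one chosen leaf per component); for each connected component C of T[R(d_{k⁻})], move from P into A one leaf maximising φ among the leaves of P in C; finally, move from P into A the k − k⁻ leaves of P with the largest φ-values. Then any set A obtained by this construction is a size-k maxPD set of T, and it satisfies Σ_{x∈A} φ(x) ≥ Σ_{x∈B} φ(x) for every size-k maxPD set B of T. -/

import Mathlib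

/-!
Rooted phylogenetic `X`-trees with positive edge lengths.

A tree on a finite vertex type `V` is encoded by its parent function: the root
has no parent, every other vertex has one, and iterating the parent function
reaches the root.  The edge into a non-root vertex `v` has length `len v`, and
`hgt v` is the distance from the root to `v`.  Leaves are the vertices with no
children; the taxon set `X` of the paper is the set `leaves` of leaves.
Every non-leaf, non-root vertex has out-degree (number of children) at least 2.
-/

noncomputable section

attribute [local instance] Classical.propDecidable

structure PhyloTree (V : Type) [Fintype V] [DecidableEq V] where
  root : V
  parent : V → Option V
  len : V → ℝ
  hgt : V → ℝ
  parent_root : parent root = none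
  parent_isSome : ∀ v, v ≠ root → (parent v).isSome
  reaches_root : ∀ v, Relation.ReflTransGen (fun a b => parent a = some b) v root
  hgt_root : hgt root = 0
  hgt_eq : ∀ v u, parent v = some u → hgt v = hgt u + len v
  len_pos : ∀ v, v ≠ root → 0 < len v
  outdeg_ge_two : ∀ v, v ≠ root → (∃ u, parent u = some v) →
    2 ≤ Set.ncard {u | parent u = some v}

namespace PhyloTree

variable {V : Type} [Fintype V] [DecidableEq V]

/-- `T.step a b` : `b` is the parent of `a`. -/
def step (T : PhyloTree V) (a b : V) : Prop := T.parent a = some b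

/-- `T.anc u v` : `u` is an ancestor of `v`, i.e. `u` lies on the (unique) path
from the root to `v` (reflexively). -/
def anc (T : PhyloTree V) (u v : V) : Prop := Relation.ReflTransGen T.step v u

/-- a leaf is a vertex with no children. -/
def IsLeaf (T : PhyloTree V) (v : V) : Prop := ∀ u, T.parent u ≠ some v

/-- the leaf set (the taxon set `X`). -/
def leaves (T : PhyloTree V) : Set V := {v | T.IsLeaf v}

/-- Phylogenetic diversity of a set `Y`: the total length of all edges `e`
whose set of descendant leaves meets `Y` (the edge into a non-root vertex `v`
has length `T.len v`). -/
def PD (T : PhyloTree V) (Y : Set V) : ℝ :=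
  ∑ v : V, if v ≠ T.root ∧ ∃ x ∈ Y, T.IsLeaf x ∧ T.anc v x then T.len v else 0

/-- the ultrametric condition: all leaves are at the same distance from the root. -/
def Ultrametric (T : PhyloTree V) : Prop :=
  ∀ x y, T.IsLeaf x → T.IsLeaf y → T.hgt x = T.hgt y

/-- `R d`: the set of vertices within distance `d` above some leaf. -/
def R (T : PhyloTree V) (d : ℝ) : Set V :=
  {v | ∃ x, T.IsLeaf x ∧ T.anc v x ∧ T.hgt x - T.hgt v ≤ d}

/-- adjacency in the forest induced by `T` on a vertex set `S`. -/
def adjIn (T : PhyloTree V) (S : Set V) (u v : V) : Prop :=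
  u ∈ S ∧ v ∈ S ∧ (T.parent u = some v ∨ T.parent v = some u)

/-- the connected components of the forest induced by `T` on `S`. -/
def components (T : PhyloTree V) (S : Set V) : Set (Set V) :=
  {C | ∃ v ∈ S, C = S ∩ {u | Relation.ReflTransGen (T.adjIn S) v u}}

/-- `c d`: the number of connected components of the forest `T[R(d)]`. -/
def ccount (T : PhyloTree V) (d : ℝ) : ℕ := (T.components (T.R d)).ncard

/-- `k` is a branching value if `T[R(d)]` has exactly `k` components for some `d ≥ 0`. -/
def IsBranchingValue (T : PhyloTree V) (k : ℕ) : Prop := ∃ d : ℝ, 0 ≤ d ∧ T.ccount d = k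

/-- the branching distance `d_k = min {d : c(d) = k}`. -/
def branchDist (T : PhyloTree V) (k : ℕ) : ℝ := sInf {d | 0 ≤ d ∧ T.ccount d = k}

/-- `k⁻`: the largest branching value `≤ k`. -/
def kminus (T : PhyloTree V) (k : ℕ) : ℕ := sSup {j | j ≤ k ∧ T.IsBranchingValue j}

/-- `k⁺`: the smallest branching value `≥ k`. -/
def kplus (T : PhyloTree V) (k : ℕ) : ℕ := sInf {j | k ≤ j ∧ T.IsBranchingValue j}

/-- `A` is a size-`k` maxPD set. -/
def IsMaxPD (T : PhyloTree V) (k : ℕ) (A : Set V) : Prop :=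
  A ⊆ T.leaves ∧ A.ncard = k ∧ ∀ Y ⊆ T.leaves, Y.ncard = k → T.PD Y ≤ T.PD A

/-- `A` is a size-`k` minPD set. -/
def IsMinPD (T : PhyloTree V) (k : ℕ) (A : Set V) : Prop :=
  A ⊆ T.leaves ∧ A.ncard = k ∧ ∀ Y ⊆ T.leaves, Y.ncard = k → T.PD A ≤ T.PD Y

/-- `m T k`: the number of size-`k` maxPD sets of `T`. -/
def m (T : PhyloTree V) (k : ℕ) : ℕ := {A : Set V | T.IsMaxPD k A}.ncard

/-- `T` is binary: every non-leaf vertex has exactly two children. -/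
def Binary (T : PhyloTree V) : Prop :=
  ∀ v, ¬ T.IsLeaf v → Set.ncard {u | T.parent u = some v} = 2

end PhyloTree

namespace PhyloTree

variable {V : Type} [Fintype V] [DecidableEq V] (T : PhyloTree V)

lemma step_ne_root {a b : V} (hab : T.step a b) : a ≠ T.root := by
  intro h; rw [h] at hab; simp [step, T.parent_root] at hab

lemma hgt_lt_of_step {a b : V} (hab : T.step a b) : T.hgt b < T.hgt a := by
  have h1 := T.hgt_eq a b hab
  have h2 := T.len_pos a (T.step_ne_root hab)
  linarith

lemma anc_root (v : V) : T.anc T.root v := T.reaches_root v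

lemma anc_cases {u v : V} (h : T.anc u v) : u = v ∨ T.hgt u < T.hgt v := by
  induction h with
  | refl => exact Or.inl rfl
  | tail _ hstep ih =>
    rcases ih with rfl | hlt
    · exact Or.inr (T.hgt_lt_of_step hstep)
    · exact Or.inr ((T.hgt_lt_of_step hstep).trans hlt)

lemma hgt_le_of_anc {u v : V} (h : T.anc u v) : T.hgt u ≤ T.hgt v := by
  rcases T.anc_cases h with rfl | hlt
  · exact le_refl _
  · exact le_of_lt hlt

lemma hgt_nonneg (v : V) : 0 ≤ T.hgt v := by
  have := T.hgt_le_of_anc (T.anc_root v)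
  rwa [T.hgt_root] at this

lemma anc_antisymm {u v : V} (h1 : T.anc u v) (h2 : T.anc v u) : u = v := by
  rcases T.anc_cases h1 with rfl | hlt
  · rfl
  · rcases T.anc_cases h2 with rfl | hlt2
    · rfl
    · exact absurd (hlt.trans hlt2) (lt_irrefl _)

lemma step_comparable {u v : V} : ∀ {x : V}, Relation.ReflTransGen T.step x u →
    Relation.ReflTransGen T.step x v →
    Relation.ReflTransGen T.step u v ∨ Relation.ReflTransGen T.step v u := by
  intro x hxu
  induction hxu using Relation.ReflTransGen.head_induction_on with
  | refl => exact fun hxv => Or.inl hxv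
  | head hstep htail ih =>
    intro hxv
    rcases Relation.ReflTransGen.cases_head hxv with rfl | ⟨c, hc, hcv⟩
    · exact Or.inr (htail.head hstep)
    · have hcc : c = _ := Option.some.inj (hc.symm.trans hstep)
      subst hcc
      exact ih hcv

lemma anc_comparable {u v x : V} (hu : T.anc u x) (hv : T.anc v x) :
    T.anc v u ∨ T.anc u v := T.step_comparable hu hv

lemma exists_child_of_not_leaf {v : V} (hl : ¬ T.IsLeaf v) : ∃ u, T.parent u = some v := by
  simpa [IsLeaf] using hl

lemma exists_leaf_desc (v : V) : ∃ x, T.IsLeaf x ∧ T.anc v x := by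
  have H : ∀ (n : ℕ) (v : V), (Finset.univ.filter fun u => T.hgt v < T.hgt u).card ≤ n →
      ∃ x, T.IsLeaf x ∧ T.anc v x := by
    intro n
    induction n with
    | zero =>
      intro v hcard
      by_cases hl : T.IsLeaf v
      · exact ⟨v, hl, Relation.ReflTransGen.refl⟩
      · obtain ⟨u, hu⟩ := T.exists_child_of_not_leaf hl
        have hmem : u ∈ Finset.univ.filter fun w => T.hgt v < T.hgt w := by
          simp [Finset.mem_filter, T.hgt_lt_of_step hu]
        have := Finset.card_pos.mpr ⟨u, hmem⟩
        omega
    | succ n ih =>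
      intro v hcard
      by_cases hl : T.IsLeaf v
      · exact ⟨v, hl, Relation.ReflTransGen.refl⟩
      · obtain ⟨u, hu⟩ := T.exists_child_of_not_leaf hl
        have hvu : T.hgt v < T.hgt u := T.hgt_lt_of_step hu
        have hss : (Finset.univ.filter fun w => T.hgt u < T.hgt w) ⊂
            (Finset.univ.filter fun w => T.hgt v < T.hgt w) := by
          constructor
          · intro w hw
            simp only [Finset.mem_filter, Finset.mem_univ, true_and] at hw ⊢
            exact hvu.trans hw
          · intro hsub
            have hmem : u ∈ Finset.univ.filter fun w => T.hgt v < T.hgt w := by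
              simp [Finset.mem_filter, hvu]
            have := hsub hmem
            simp [Finset.mem_filter] at this
        have hcard' : (Finset.univ.filter fun w => T.hgt u < T.hgt w).card ≤ n := by
          have := Finset.card_lt_card hss
          omega
        obtain ⟨x, hx, hanc⟩ := ih u hcard'
        exact ⟨x, hx, hanc.tail hu⟩
  exact H _ v le_rfl

section Ultra

variable (h : ℝ) (hh : ∀ x, T.IsLeaf x → T.hgt x = h)

include hh

lemma h_nonneg : 0 ≤ h := by
  obtain ⟨x, hx, _⟩ := T.exists_leaf_desc T.root
  rw [← hh x hx]; exact T.hgt_nonneg x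

lemma hgt_le_h (v : V) : T.hgt v ≤ h := by
  obtain ⟨x, hx, hanc⟩ := T.exists_leaf_desc v
  rw [← hh x hx]; exact T.hgt_le_of_anc hanc

lemma leaf_iff_hgt {v : V} : T.IsLeaf v ↔ T.hgt v = h := by
  constructor
  · exact hh v
  · intro hv
    by_contra hl
    obtain ⟨u, hu⟩ := T.exists_child_of_not_leaf hl
    have h1 : T.hgt v < T.hgt u := T.hgt_lt_of_step hu
    have h2 := T.hgt_le_h h hh u
    linarith [hv]
lemma R_eq {d : ℝ} : T.R d = {v | h - d ≤ T.hgt v} := by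
  ext v
  constructor
  · rintro ⟨x, hx, hanc, hle⟩
    have := hh x hx
    simp only [Set.mem_setOf_eq]
    linarith
  · intro hv
    obtain ⟨x, hx, hanc⟩ := T.exists_leaf_desc v
    exact ⟨x, hx, hanc, by have := hh x hx; simp only [Set.mem_setOf_eq] at hv; linarith⟩

end Ultra

end PhyloTree


namespace PhyloTree

variable {V : Type} [Fintype V] [DecidableEq V] (T : PhyloTree V)

/-- candidate component tops at level `d` (heights measured from leaves at height `h`). -/
def Mtop (h d : ℝ) : Set V :=
  {w | h - d ≤ T.hgt w ∧ ∀ u, T.parent w = some u → T.hgt u < h - d}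

/-- the vertex set of the component of `T[R d]` with top `w`. -/
def Dcomp (h d : ℝ) (w : V) : Set V := {u | h - d ≤ T.hgt u ∧ T.anc w u}

lemma exists_top (h d : ℝ) : ∀ {v : V}, h - d ≤ T.hgt v →
    ∃ w, w ∈ T.Mtop h d ∧ T.anc w v := by
  intro v
  have hr := T.reaches_root v
  induction hr using Relation.ReflTransGen.head_induction_on with
  | refl =>
    intro hv
    refine ⟨T.root, ⟨hv, ?_⟩, Relation.ReflTransGen.refl⟩
    intro u hu; rw [T.parent_root] at hu; cases hu
  | @head a c h' htail ih =>
    intro ha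
    by_cases hc : h - d ≤ T.hgt c
    · obtain ⟨w, hw, hwc⟩ := ih hc
      exact ⟨w, hw, Relation.ReflTransGen.head h' hwc⟩
    · refine ⟨a, ⟨ha, ?_⟩, Relation.ReflTransGen.refl⟩
      intro u hu
      have : u = c := Option.some.inj (hu.symm.trans h')
      subst this
      linarith [not_le.mp hc]

lemma mtop_eq_of_anc {h d : ℝ} {w1 w2 v : V} (hw1 : w1 ∈ T.Mtop h d) (hw2 : w2 ∈ T.Mtop h d)
    (h1 : T.anc w1 v) (h2 : T.anc w2 v) : w1 = w2 := by
  have key : ∀ {a b : V}, a ∈ T.Mtop h d → b ∈ T.Mtop h d → T.anc a b → a = b := by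
    intro a b ha hb hab
    rcases Relation.ReflTransGen.cases_head hab with h | ⟨c, hc, hcb⟩
    · exact h.symm
    · exfalso
      have hlt : T.hgt c < h - d := hb.2 c hc
      have : T.hgt a ≤ T.hgt c := T.hgt_le_of_anc hcb
      linarith [ha.1]
  rcases T.anc_comparable h1 h2 with h | h
  · exact (key hw2 hw1 h).symm
  · exact key hw1 hw2 h

lemma topd_spec (h d : ℝ) {v : V} (hv : h - d ≤ T.hgt v) :
    ∃ w, (w ∈ T.Mtop h d ∧ T.anc w v) := T.exists_top h d hv

/-- the top of the component of `v` at level `d`. -/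
def topd (h d : ℝ) (v : V) : V :=
  if hv : h - d ≤ T.hgt v then Classical.choose (T.exists_top h d hv) else v

lemma topd_mem {h d : ℝ} {v : V} (hv : h - d ≤ T.hgt v) :
    T.topd h d v ∈ T.Mtop h d ∧ T.anc (T.topd h d v) v := by
  rw [topd, dif_pos hv]
  exact Classical.choose_spec (T.exists_top h d hv)

lemma topd_eq {h d : ℝ} {w v : V} (hw : w ∈ T.Mtop h d) (hanc : T.anc w v) :
    T.topd h d v = w := by
  have hv : h - d ≤ T.hgt v := le_trans hw.1 (T.hgt_le_of_anc hanc)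
  obtain ⟨hm, ha⟩ := T.topd_mem hv
  exact T.mtop_eq_of_anc hm hw ha hanc

lemma adjIn_symm (S : Set V) : Symmetric (T.adjIn S) := by
  rintro u v ⟨h1, h2, h3⟩
  exact ⟨h2, h1, h3.symm⟩

lemma mem_Dcomp_self {h d : ℝ} {w : V} (hw : w ∈ T.Mtop h d) : w ∈ T.Dcomp h d w :=
  ⟨hw.1, Relation.ReflTransGen.refl⟩

section Ultra2

variable (h : ℝ) (hh : ∀ x, T.IsLeaf x → T.hgt x = h)

include hh

lemma mem_R_iff {d : ℝ} {v : V} : v ∈ T.R d ↔ h - d ≤ T.hgt v := by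
  rw [T.R_eq h hh]; rfl

lemma leaf_mem_R {d : ℝ} (hd : 0 ≤ d) {x : V} (hx : T.IsLeaf x) : x ∈ T.R d := by
  rw [T.mem_R_iff h hh, hh x hx]; linarith

lemma conn_desc {d : ℝ} {w : V} (hw : w ∈ T.Mtop h d) :
    ∀ {u : V}, T.anc w u → Relation.ReflTransGen (T.adjIn (T.R d)) w u := by
  intro u hanc
  induction hanc using Relation.ReflTransGen.head_induction_on with
  | refl => exact Relation.ReflTransGen.refl
  | @head a c h' htail ih =>
    refine ih.tail ?_
    have hca : T.anc w a := Relation.ReflTransGen.head h' htail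
    refine ⟨?_, ?_, Or.inr h'⟩
    · rw [T.mem_R_iff h hh]
      exact le_trans hw.1 (T.hgt_le_of_anc htail)
    · rw [T.mem_R_iff h hh]
      exact le_trans hw.1 (T.hgt_le_of_anc hca)

lemma conn_inv {d : ℝ} {w u : V} (hw : w ∈ T.Mtop h d)
    (hconn : Relation.ReflTransGen (T.adjIn (T.R d)) w u) : u ∈ T.Dcomp h d w := by
  induction hconn with
  | refl => exact ⟨hw.1, Relation.ReflTransGen.refl⟩
  | @tail b c hwb hbc ih =>
    obtain ⟨hb, hc, hedge⟩ := hbc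
    rw [T.mem_R_iff h hh] at hc
    rcases hedge with he | he
    · -- parent b = some c : c is the parent of b
      have hanc_cb : T.anc c b := Relation.ReflTransGen.single he
      rcases T.anc_comparable ih.2 hanc_cb with hcw | hwc
      · -- anc c w
        rcases Relation.ReflTransGen.cases_head hcw with hq | ⟨e, he', hec⟩
        · exact ⟨hc, hq ▸ Relation.ReflTransGen.refl⟩
        · exfalso
          have : T.hgt e < h - d := hw.2 e he'
          have : T.hgt c ≤ T.hgt e := T.hgt_le_of_anc hec
          linarith
      · exact ⟨hc, hwc⟩
    · -- parent c = some b : b is the parent of c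
      exact ⟨hc, Relation.ReflTransGen.head he ih.2⟩

lemma components_eq {d : ℝ} (hd : 0 ≤ d) :
    T.components (T.R d) = T.Dcomp h d '' T.Mtop h d := by
  ext C
  constructor
  · rintro ⟨v, hv, rfl⟩
    have hv' : h - d ≤ T.hgt v := (T.mem_R_iff h hh).mp hv
    obtain ⟨w, hw, hwv⟩ := T.exists_top h d hv'
    refine ⟨w, hw, Eq.symm ?_⟩
    have hconn_wv : Relation.ReflTransGen (T.adjIn (T.R d)) w v := T.conn_desc h hh hw hwv
    ext x
    constructor
    · rintro ⟨hx1, hx2⟩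
      exact T.conn_inv h hh hw (hconn_wv.trans hx2)
    · intro hx
      have hconn_wx : Relation.ReflTransGen (T.adjIn (T.R d)) w x := T.conn_desc h hh hw hx.2
      have hsym : Symmetric (Relation.ReflTransGen (T.adjIn (T.R d))) :=
        fun _ _ hab => (@Relation.ReflTransGen.symmetric _ _ ⟨fun _ _ h' => T.adjIn_symm (T.R d) h'⟩).symm _ _ hab
      refine ⟨(T.mem_R_iff h hh).mpr hx.1, (hsym hconn_wv).trans hconn_wx⟩
  · rintro ⟨w, hw, rfl⟩
    refine ⟨w, (T.mem_R_iff h hh).mpr hw.1, ?_⟩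
    ext x
    constructor
    · intro hx
      have hconn : Relation.ReflTransGen (T.adjIn (T.R d)) w x := T.conn_desc h hh hw hx.2
      exact ⟨(T.mem_R_iff h hh).mpr hx.1, hconn⟩
    · rintro ⟨hx1, hx2⟩
      exact T.conn_inv h hh hw hx2

lemma Dcomp_disjoint {d : ℝ} {w1 w2 : V} (hw1 : w1 ∈ T.Mtop h d) (hw2 : w2 ∈ T.Mtop h d)
    (hne : w1 ≠ w2) : T.Dcomp h d w1 ∩ T.Dcomp h d w2 = ∅ := by
  ext x
  simp only [Set.mem_inter_iff, Set.mem_empty_iff_false, iff_false]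
  rintro ⟨⟨_, h1⟩, ⟨_, h2⟩⟩
  exact hne (T.mtop_eq_of_anc hw1 hw2 h1 h2)

lemma Dcomp_injOn {d : ℝ} : Set.InjOn (T.Dcomp h d) (T.Mtop h d) := by
  intro w1 h1 w2 h2 heq
  by_contra hne
  have := T.Dcomp_disjoint h hh h1 h2 hne
  rw [heq, Set.inter_self] at this
  exact absurd (this ▸ T.mem_Dcomp_self h2 : w2 ∈ (∅ : Set V)) (Set.notMem_empty w2)

lemma ccount_eq {d : ℝ} (hd : 0 ≤ d) : T.ccount d = (T.Mtop h d).ncard := by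
  rw [ccount, T.components_eq h hh hd]
  exact Set.ncard_image_of_injOn (T.Dcomp_injOn h hh)

end Ultra2

end PhyloTree


namespace PhyloTree

variable {V : Type} [Fintype V] [DecidableEq V] (T : PhyloTree V)

section Ultra3

variable (h : ℝ) (hh : ∀ x, T.IsLeaf x → T.hgt x = h)

include hh

lemma ccount_antitone {d d' : ℝ} (hd : 0 ≤ d) (hdd : d ≤ d') : T.ccount d' ≤ T.ccount d := by
  have hd' : 0 ≤ d' := hd.trans hdd
  rw [T.ccount_eq h hh hd, T.ccount_eq h hh hd']
  have hsub : T.Mtop h d' ⊆ (T.topd h d') '' (T.Mtop h d) := by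
    intro w' hw'
    obtain ⟨x, hx, hxanc⟩ := T.exists_leaf_desc w'
    have hxh : h - d ≤ T.hgt x := by rw [hh x hx]; linarith
    obtain ⟨hwm, hwanc⟩ := T.topd_mem hxh
    refine ⟨T.topd h d x, hwm, ?_⟩
    have hcomp : T.anc w' (T.topd h d x) := by
      rcases T.anc_comparable hwanc hxanc with hc | hc
      · exact hc
      · -- anc (topd h d x) w' : then equal or contradiction
        rcases Relation.ReflTransGen.cases_head hc with hq | ⟨c, hcstep, hcrest⟩
        · exact hq ▸ Relation.ReflTransGen.refl
        · exfalso
          have h1 : T.hgt c < h - d' := hw'.2 c hcstep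
          have h2 : T.hgt (T.topd h d x) ≤ T.hgt c := T.hgt_le_of_anc hcrest
          have h3 : h - d ≤ T.hgt (T.topd h d x) := hwm.1
          linarith
    exact T.topd_eq hw' hcomp
  calc (T.Mtop h d').ncard ≤ ((T.topd h d') '' (T.Mtop h d)).ncard :=
        Set.ncard_le_ncard hsub (Set.Finite.image _ (Set.toFinite _))
    _ ≤ (T.Mtop h d).ncard := Set.ncard_image_le (Set.toFinite _)

lemma Mtop_zero : T.Mtop h 0 = T.leaves := by
  ext w
  constructor
  · rintro ⟨hw1, hw2⟩
    rw [sub_zero] at hw1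
    exact (T.leaf_iff_hgt h hh).mpr (le_antisymm (T.hgt_le_h h hh w) hw1)
  · intro hw
    refine ⟨by rw [sub_zero, hh w hw], fun u hu => ?_⟩
    rw [sub_zero, ← hh w hw]
    exact T.hgt_lt_of_step hu

lemma ccount_zero : T.ccount 0 = T.leaves.ncard := by
  rw [T.ccount_eq h hh le_rfl, T.Mtop_zero h hh]

lemma Mtop_ge_h {d : ℝ} (hd : h ≤ d) : T.Mtop h d = {T.root} := by
  ext w
  constructor
  · rintro ⟨hw1, hw2⟩
    by_contra hne
    obtain ⟨u, hu⟩ := Option.isSome_iff_exists.mp (T.parent_isSome w hne)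
    have := hw2 u hu
    have := T.hgt_nonneg u
    simp only [Set.mem_singleton_iff] at hne
    linarith
  · rintro rfl
    refine ⟨by rw [T.hgt_root]; linarith, fun u hu => ?_⟩
    rw [T.parent_root] at hu; cases hu

lemma ccount_ge_h {d : ℝ} (hd : h ≤ d) : T.ccount d = 1 := by
  have h0 : (0:ℝ) ≤ d := (T.h_nonneg h hh).trans hd
  rw [T.ccount_eq h hh h0, T.Mtop_ge_h h hh hd, Set.ncard_singleton]

lemma branching_one : T.IsBranchingValue 1 :=
  ⟨h, T.h_nonneg h hh, T.ccount_ge_h h hh le_rfl⟩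

lemma branching_card : T.IsBranchingValue (T.leaves.ncard) :=
  ⟨0, le_rfl, T.ccount_zero h hh⟩

lemma lt_h_of_ccount_ge_two {d : ℝ} (hd : 0 ≤ d) (hc : 2 ≤ T.ccount d) : d < h := by
  by_contra hcon
  rw [T.ccount_ge_h h hh (not_lt.mp hcon)] at hc
  omega

omit hh in
lemma Mtop_const_right (d : ℝ) :
    ∃ ε > 0, ∀ d', d ≤ d' → d' < d + ε → T.Mtop h d' = T.Mtop h d := by
  have hne : (Finset.univ : Finset V).Nonempty := ⟨T.root, Finset.mem_univ _⟩
  set f : V → ℝ := fun u => if d < h - T.hgt u then h - T.hgt u - d else 1 with hf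
  refine ⟨Finset.univ.inf' hne f, ?_, ?_⟩
  · refine (Finset.lt_inf'_iff hne).mpr fun u _ => ?_
    rw [hf]; dsimp only
    split
    · next hu => linarith
    · norm_num
  · intro d' h1 h2
    have key : ∀ u : V, d < h - T.hgt u → d' < h - T.hgt u := by
      intro u hu
      have hle : Finset.univ.inf' hne f ≤ f u := Finset.inf'_le _ (Finset.mem_univ u)
      rw [hf] at hle; simp only [if_pos hu] at hle
      linarith
    ext w
    constructor
    · rintro ⟨hw1, hw2⟩
      refine ⟨?_, fun u hu => by have := hw2 u hu; linarith⟩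
      by_contra hcon
      have hlt : d < h - T.hgt w := by linarith [not_le.mp hcon]
      have := key w hlt
      linarith
    · rintro ⟨hw1, hw2⟩
      refine ⟨by linarith, fun u hu => ?_⟩
      have h3 := hw2 u hu
      have := key u (by linarith)
      linarith

omit hh in
lemma Mtop_const_left {d : ℝ} (h0 : 0 ≤ h) (hd : 0 < d) (hno : ∀ u : V, h - T.hgt u ≠ d) :
    ∃ ε > 0, ε ≤ d ∧ ∀ d', d - ε < d' → d' ≤ d → T.Mtop h d' = T.Mtop h d := by
  have hne : (Finset.univ : Finset V).Nonempty := ⟨T.root, Finset.mem_univ _⟩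
  set f : V → ℝ := fun u => if h - T.hgt u < d then d - (h - T.hgt u) else d with hf
  refine ⟨Finset.univ.inf' hne f, ?_, ?_, ?_⟩
  · refine (Finset.lt_inf'_iff hne).mpr fun u _ => ?_
    rw [hf]; dsimp only
    split
    · next hu => linarith
    · exact hd
  · refine le_trans (Finset.inf'_le _ (Finset.mem_univ T.root)) ?_
    rw [hf]; dsimp only
    rw [T.hgt_root]
    split
    · next hu => linarith
    · exact le_rfl
  · intro d' h1 h2
    have key : ∀ u : V, h - T.hgt u ≤ d → h - T.hgt u ≤ d' := by
      intro u hu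
      have hu' : h - T.hgt u < d := lt_of_le_of_ne hu (hno u)
      have hle : Finset.univ.inf' hne f ≤ f u := Finset.inf'_le _ (Finset.mem_univ u)
      rw [hf] at hle; simp only [if_pos hu'] at hle
      linarith
    ext w
    constructor
    · rintro ⟨hw1, hw2⟩
      refine ⟨by linarith, fun u hu => ?_⟩
      have h3 := hw2 u hu
      by_contra hcon
      have : h - T.hgt u ≤ d := by linarith [not_lt.mp hcon]
      have := key u this
      linarith
    · rintro ⟨hw1, hw2⟩
      refine ⟨by have := key w (by linarith); linarith, fun u hu => ?_⟩
      have h3 := hw2 u hu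
      linarith

lemma branchDist_spec {j : ℕ} (hbr : T.IsBranchingValue j) :
    0 ≤ T.branchDist j ∧ T.ccount (T.branchDist j) = j ∧
      ∀ d, 0 ≤ d → T.ccount d = j → T.branchDist j ≤ d := by
  obtain ⟨d0, hd0, hc0⟩ := hbr
  have hSne : {d : ℝ | 0 ≤ d ∧ T.ccount d = j}.Nonempty := ⟨d0, hd0, hc0⟩
  have hbdd : BddBelow {d : ℝ | 0 ≤ d ∧ T.ccount d = j} := ⟨0, fun x hx => hx.1⟩
  have hd : 0 ≤ T.branchDist j := le_csInf hSne (fun x hx => hx.1)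
  have hmin : ∀ d, 0 ≤ d → T.ccount d = j → T.branchDist j ≤ d :=
    fun d h1 h2 => csInf_le hbdd ⟨h1, h2⟩
  refine ⟨hd, ?_, hmin⟩
  obtain ⟨ε, hε, hconst⟩ := T.Mtop_const_right h (T.branchDist j)
  obtain ⟨a, ha, halt⟩ := Real.lt_sInf_add_pos hSne hε
  have haa : T.branchDist j ≤ a := csInf_le hbdd ha
  have : T.Mtop h a = T.Mtop h (T.branchDist j) := hconst a haa halt
  rw [T.ccount_eq h hh hd, ← this, ← T.ccount_eq h hh ha.1]
  exact ha.2

lemma branchDist_breakpoint {j : ℕ} (hbr : T.IsBranchingValue j)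
    (hdpos : 0 < T.branchDist j) : ∃ u : V, h - T.hgt u = T.branchDist j := by
  by_contra hno
  push_neg at hno
  obtain ⟨hd0, hdc, hdmin⟩ := T.branchDist_spec h hh hbr
  obtain ⟨ε, hε, hεd, hconst⟩ := T.Mtop_const_left h (T.h_nonneg h hh) hdpos hno
  set d' := T.branchDist j - ε / 2 with hd'
  have h1 : T.branchDist j - ε < d' := by rw [hd']; linarith
  have h2 : d' ≤ T.branchDist j := by rw [hd']; linarith
  have h3 : 0 ≤ d' := by rw [hd']; linarith
  have : T.ccount d' = j := by
    rw [T.ccount_eq h hh h3, hconst d' h1 h2, ← T.ccount_eq h hh hd0, hdc]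
  have := hdmin d' h3 this
  rw [hd'] at this
  linarith

end Ultra3

end PhyloTree


namespace PhyloTree

variable {V : Type} [Fintype V] [DecidableEq V] (T : PhyloTree V)

/-- the finite set of heights of vertices. -/
def hgtSet : Finset ℝ := Finset.univ.image T.hgt

/-- the largest height below `t` (or `0`). -/
def predH (t : ℝ) : ℝ :=
  if hne : ((T.hgtSet).filter (· < t)).Nonempty then ((T.hgtSet).filter (· < t)).max' hne else 0

def gap (t : ℝ) : ℝ := t - T.predH t

/-- the number of connected components of `T[R(h-t)]` that contain a leaf of `Y`;
equivalently, the number of edges of the Steiner tree of `Y` crossing level `t`. -/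
def NY (h : ℝ) (Y : Set V) (t : ℝ) : ℕ :=
  {w | w ∈ T.Mtop h (h - t) ∧ ∃ y ∈ Y, T.IsLeaf y ∧ T.anc w y}.ncard

lemma mem_hgtSet (v : V) : T.hgt v ∈ T.hgtSet :=
  Finset.mem_image_of_mem _ (Finset.mem_univ v)

lemma zero_mem_hgtSet : (0:ℝ) ∈ T.hgtSet := by
  have := T.mem_hgtSet T.root
  rwa [T.hgt_root] at this

lemma hgtSet_nonneg {t : ℝ} (ht : t ∈ T.hgtSet) : 0 ≤ t := by
  obtain ⟨v, _, rfl⟩ := Finset.mem_image.mp ht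
  exact T.hgt_nonneg v

lemma Mtop_sub (h t : ℝ) :
    T.Mtop h (h - t) = {w | t ≤ T.hgt w ∧ ∀ u, T.parent w = some u → T.hgt u < t} := by
  simp only [Mtop, sub_sub_cancel]

lemma gap_pos {t : ℝ} (ht : t ∈ T.hgtSet) (h0 : 0 < t) : 0 < T.gap t := by
  have hne : ((T.hgtSet).filter (· < t)).Nonempty :=
    ⟨0, Finset.mem_filter.mpr ⟨T.zero_mem_hgtSet, h0⟩⟩
  have : T.predH t < t := by
    rw [predH, dif_pos hne]
    exact (Finset.mem_filter.mp (Finset.max'_mem _ hne)).2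
  rw [gap]; linarith

lemma gap_zero : T.gap 0 = 0 := by
  have hemp : ((T.hgtSet).filter (· < (0:ℝ))) = ∅ := by
    rw [Finset.filter_eq_empty_iff]
    intro t ht
    exact not_lt.mpr (T.hgtSet_nonneg ht)
  rw [gap, predH]
  rw [dif_neg (by rw [hemp]; exact Finset.not_nonempty_empty)]
  ring

lemma gap_nonneg {t : ℝ} (ht : t ∈ T.hgtSet) : 0 ≤ T.gap t := by
  rcases eq_or_lt_of_le (T.hgtSet_nonneg ht) with rfl | h0
  · rw [T.gap_zero]
  · exact le_of_lt (T.gap_pos ht h0)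

lemma tele : ∀ (n : ℕ) {a b : ℝ}, a ∈ T.hgtSet → b ∈ T.hgtSet → a ≤ b →
    ((T.hgtSet).filter fun t => a < t ∧ t ≤ b).card ≤ n →
    ∑ t ∈ (T.hgtSet).filter (fun t => a < t ∧ t ≤ b), T.gap t = b - a := by
  intro n
  induction n with
  | zero =>
    intro a b ha hb hab hcard
    rcases eq_or_lt_of_le hab with rfl | hlt
    · rw [Finset.filter_eq_empty_iff.mpr (by rintro t _ ⟨h1, h2⟩; linarith), Finset.sum_empty]
      ring
    · exfalso
      have : b ∈ (T.hgtSet).filter fun t => a < t ∧ t ≤ b :=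
        Finset.mem_filter.mpr ⟨hb, hlt, le_rfl⟩
      have := Finset.card_pos.mpr ⟨b, this⟩
      omega
  | succ n ih =>
    intro a b ha hb hab hcard
    rcases eq_or_lt_of_le hab with rfl | hlt
    · rw [Finset.filter_eq_empty_iff.mpr (by rintro t _ ⟨h1, h2⟩; linarith), Finset.sum_empty]
      ring
    · have hFne : ((T.hgtSet).filter (· < b)).Nonempty :=
        ⟨a, Finset.mem_filter.mpr ⟨ha, hlt⟩⟩
      set p := ((T.hgtSet).filter (· < b)).max' hFne with hp
      have hpredb : T.predH b = p := by rw [predH, dif_pos hFne]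
      have hp_mem : p ∈ T.hgtSet := (Finset.mem_filter.mp (Finset.max'_mem _ hFne)).1
      have hp_lt : p < b := (Finset.mem_filter.mp (Finset.max'_mem _ hFne)).2
      have hap : a ≤ p := by
        rw [hp]
        refine Finset.le_max' ((T.hgtSet).filter (· < b)) a ?_
        exact Finset.mem_filter.mpr ⟨ha, hlt⟩
      have hsplit : (T.hgtSet).filter (fun t => a < t ∧ t ≤ b) =
          insert b ((T.hgtSet).filter (fun t => a < t ∧ t ≤ p)) := by
        ext t
        simp only [Finset.mem_filter, Finset.mem_insert]
        constructor
        · rintro ⟨htm, h1, h2⟩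
          rcases eq_or_lt_of_le h2 with rfl | h3
          · exact Or.inl rfl
          · refine Or.inr ⟨htm, h1, ?_⟩
            rw [hp]
            refine Finset.le_max' ((T.hgtSet).filter (· < b)) t ?_
            exact Finset.mem_filter.mpr ⟨htm, h3⟩
        · rintro (rfl | ⟨htm, h1, h2⟩)
          · exact ⟨hb, hlt, le_rfl⟩
          · exact ⟨htm, h1, h2.trans hp_lt.le⟩
      have hbnot : b ∉ (T.hgtSet).filter (fun t => a < t ∧ t ≤ p) := by
        intro hmem
        have := (Finset.mem_filter.mp hmem).2.2
        linarith
      have hcard' : ((T.hgtSet).filter (fun t => a < t ∧ t ≤ p)).card ≤ n := by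
        rw [hsplit, Finset.card_insert_of_notMem hbnot] at hcard
        omega
      rw [hsplit, Finset.sum_insert hbnot, ih ha hp_mem hap hcard', gap, hpredb]
      ring

lemma hgt_parent_mem {v u : V} (hu : T.parent v = some u) : T.hgt u ∈ T.hgtSet :=
  T.mem_hgtSet u

section UltraPD

variable (h : ℝ) (hh : ∀ x, T.IsLeaf x → T.hgt x = h)

include hh

lemma PD_eq_levels (Y : Set V) :
    T.PD Y = ∑ t ∈ T.hgtSet, T.gap t * (T.NY h Y t : ℝ) := by
  classical
  have hstep1 : T.PD Y = ∑ v ∈ Finset.univ.filter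
      (fun v => v ≠ T.root ∧ ∃ x ∈ Y, T.IsLeaf x ∧ T.anc v x), T.len v := by
    rw [PD, Finset.sum_filter]
  set RelY := Finset.univ.filter
      (fun v => v ≠ T.root ∧ ∃ x ∈ Y, T.IsLeaf x ∧ T.anc v x) with hRelY
  have hstep2 : ∀ v ∈ RelY, T.len v =
      ∑ t ∈ (T.hgtSet).filter (fun t =>
        (∃ u, T.parent v = some u ∧ T.hgt u < t) ∧ t ≤ T.hgt v), T.gap t := by
    intro v hv
    have hvr : v ≠ T.root := (Finset.mem_filter.mp hv).2.1
    obtain ⟨u, hu⟩ := Option.isSome_iff_exists.mp (T.parent_isSome v hvr)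
    have hlen : T.len v = T.hgt v - T.hgt u := by
      have := T.hgt_eq v u hu; linarith
    have hfe : ((T.hgtSet).filter (fun t =>
        (∃ u', T.parent v = some u' ∧ T.hgt u' < t) ∧ t ≤ T.hgt v)) =
        ((T.hgtSet).filter (fun t => T.hgt u < t ∧ t ≤ T.hgt v)) := by
      apply Finset.filter_congr
      intro t _
      constructor
      · rintro ⟨⟨u', hu', hlt⟩, h2⟩
        rw [hu] at hu'
        exact ⟨(Option.some.inj hu') ▸ hlt, h2⟩
      · rintro ⟨h1, h2⟩
        exact ⟨⟨u, hu, h1⟩, h2⟩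
    rw [hfe, T.tele (((T.hgtSet).filter (fun t => T.hgt u < t ∧ t ≤ T.hgt v)).card)
      (T.mem_hgtSet u) (T.mem_hgtSet v) (le_of_lt (T.hgt_lt_of_step hu)) le_rfl, hlen]
  rw [hstep1, Finset.sum_congr rfl hstep2]
  have hstep3 : ∑ v ∈ RelY, (∑ t ∈ (T.hgtSet).filter (fun t =>
        (∃ u, T.parent v = some u ∧ T.hgt u < t) ∧ t ≤ T.hgt v), T.gap t) =
      ∑ v ∈ RelY, ∑ t ∈ T.hgtSet,
        (if (∃ u, T.parent v = some u ∧ T.hgt u < t) ∧ t ≤ T.hgt v then T.gap t else 0) := by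
    apply Finset.sum_congr rfl
    intro v _
    rw [Finset.sum_filter]
  rw [hstep3, Finset.sum_comm]
  apply Finset.sum_congr rfl
  intro t ht
  rw [← Finset.sum_filter]
  rw [Finset.sum_const]
  rcases eq_or_lt_of_le (T.hgtSet_nonneg ht) with rfl | h0
  · -- t = 0 : both sides vanish since gap 0 = 0
    have hemp : (RelY.filter (fun v =>
        (∃ u, T.parent v = some u ∧ T.hgt u < 0) ∧ (0:ℝ) ≤ T.hgt v)) = ∅ := by
      rw [Finset.filter_eq_empty_iff]
      rintro v _ ⟨⟨u, _, hlt⟩, _⟩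
      exact absurd hlt (not_lt.mpr (T.hgt_nonneg u))
    rw [hemp]
    simp [T.gap_zero]
  · -- t > 0 : counts agree
    have hseteq : {w | w ∈ T.Mtop h (h - t) ∧ ∃ y ∈ Y, T.IsLeaf y ∧ T.anc w y} =
        ↑(RelY.filter (fun v =>
          (∃ u, T.parent v = some u ∧ T.hgt u < t) ∧ t ≤ T.hgt v)) := by
      ext w
      simp only [Set.mem_setOf_eq, Finset.coe_filter, Finset.mem_filter, hRelY,
        Finset.mem_univ, true_and]
      rw [T.Mtop_sub h t]
      constructor
      · rintro ⟨⟨hw1, hw2⟩, hmeet⟩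
        have hwr : w ≠ T.root := by
          intro hq
          rw [hq, T.hgt_root] at hw1
          linarith
        obtain ⟨u, hu⟩ := Option.isSome_iff_exists.mp (T.parent_isSome w hwr)
        exact ⟨⟨hwr, hmeet⟩, ⟨u, hu, hw2 u hu⟩, hw1⟩
      · rintro ⟨⟨hwr, hmeet⟩, ⟨u, hu, hult⟩, hw1⟩
        refine ⟨⟨hw1, fun u' hu' => ?_⟩, hmeet⟩
        rw [hu] at hu'
        exact (Option.some.inj hu') ▸ hult
    rw [NY, hseteq, Set.ncard_coe_finset]
    rw [nsmul_eq_mul, mul_comm]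

end UltraPD

end PhyloTree


namespace PhyloTree

variable {V : Type} [Fintype V] [DecidableEq V] (T : PhyloTree V)

lemma NY_le_ncard (h : ℝ) (Y : Set V) (t : ℝ) : T.NY h Y t ≤ Y.ncard := by
  classical
  rw [NY]
  have hch : ∀ w : V, ∃ y : V,
      (w ∈ {w | w ∈ T.Mtop h (h - t) ∧ ∃ y ∈ Y, T.IsLeaf y ∧ T.anc w y} → y ∈ Y ∧ T.anc w y) := by
    intro w
    by_cases hw : w ∈ {w | w ∈ T.Mtop h (h - t) ∧ ∃ y ∈ Y, T.IsLeaf y ∧ T.anc w y}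
    · obtain ⟨y, hy, _, ha⟩ := hw.2
      exact ⟨y, fun _ => ⟨hy, ha⟩⟩
    · exact ⟨w, fun hq => absurd hq hw⟩
  choose f hf using hch
  apply Set.ncard_le_ncard_of_injOn f
  · intro w hw; exact (hf w hw).1
  · intro w1 h1 w2 h2 heq
    have a1 : T.anc w1 (f w1) := (hf w1 h1).2
    have a2 : T.anc w2 (f w1) := by rw [heq]; exact (hf w2 h2).2
    exact T.mtop_eq_of_anc h1.1 h2.1 a1 a2

lemma NY_le_Mtop (h : ℝ) (Y : Set V) (t : ℝ) : T.NY h Y t ≤ (T.Mtop h (h - t)).ncard :=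
  Set.ncard_le_ncard (fun w hw => hw.1) (Set.toFinite _)

lemma topd_topd {h d d' : ℝ} (hdd : d ≤ d') {v : V} (hv : h - d ≤ T.hgt v) :
    T.topd h d' (T.topd h d v) = T.topd h d' v := by
  obtain ⟨hm, ha⟩ := T.topd_mem hv
  have hv' : h - d' ≤ T.hgt (T.topd h d v) := le_trans (by linarith) hm.1
  obtain ⟨hm', ha'⟩ := T.topd_mem hv'
  have hanc : T.anc (T.topd h d' (T.topd h d v)) v := Relation.ReflTransGen.trans ha ha'
  exact (T.topd_eq hm' hanc).symm

lemma crossSet_eq_image (h : ℝ) (hh : ∀ x, T.IsLeaf x → T.hgt x = h)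
    {Y : Set V} (hYl : Y ⊆ T.leaves) {d : ℝ} (hd : 0 ≤ d) :
    {w | w ∈ T.Mtop h d ∧ ∃ y ∈ Y, T.IsLeaf y ∧ T.anc w y} = T.topd h d '' Y := by
  ext w
  constructor
  · rintro ⟨hw, y, hy, hyl, hanc⟩
    exact ⟨y, hy, T.topd_eq hw hanc⟩
  · rintro ⟨y, hy, rfl⟩
    have hyl : T.IsLeaf y := hYl hy
    have hyh : h - d ≤ T.hgt y := by rw [hh y hyl]; linarith
    obtain ⟨hm, ha⟩ := T.topd_mem hyh
    exact ⟨hm, y, hy, hyl, ha⟩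

lemma NY_eq_image (h : ℝ) (hh : ∀ x, T.IsLeaf x → T.hgt x = h)
    {Y : Set V} (hYl : Y ⊆ T.leaves) {t : ℝ} (ht : t ≤ h) :
    T.NY h Y t = (T.topd h (h - t) '' Y).ncard := by
  rw [NY, T.crossSet_eq_image h hh hYl (by linarith)]

lemma topd_image_eq (h : ℝ) (hh : ∀ x, T.IsLeaf x → T.hgt x = h)
    {d d' : ℝ} (hd : 0 ≤ d) (hdd : d ≤ d') :
    T.topd h d' '' (T.Mtop h d) = T.Mtop h d' := by
  ext w'
  constructor
  · rintro ⟨w, hw, rfl⟩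
    have hv' : h - d' ≤ T.hgt w := le_trans (by linarith) hw.1
    exact (T.topd_mem hv').1
  · intro hw'
    obtain ⟨x, hx, hxanc⟩ := T.exists_leaf_desc w'
    have hxh : h - d ≤ T.hgt x := by rw [hh x hx]; linarith
    obtain ⟨hwm, hwanc⟩ := T.topd_mem hxh
    refine ⟨T.topd h d x, hwm, ?_⟩
    rw [T.topd_topd hdd hxh]
    exact T.topd_eq hw' hxanc

lemma topd_injOn_of_ncard_eq (h : ℝ) (hh : ∀ x, T.IsLeaf x → T.hgt x = h)
    {d d' : ℝ} (hd : 0 ≤ d) (hdd : d ≤ d')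
    (hc : (T.Mtop h d').ncard = (T.Mtop h d).ncard) :
    Set.InjOn (T.topd h d') (T.Mtop h d) := by
  apply Set.injOn_of_ncard_image_eq
  · rw [T.topd_image_eq h hh hd hdd, hc]
  · exact Set.toFinite _

lemma top_glue (h : ℝ) (hh : ∀ x, T.IsLeaf x → T.hgt x = h)
    {dp d : ℝ} (hdp : 0 ≤ dp) (hd : 0 ≤ d)
    (hcase : d ≤ dp ∨ (dp ≤ d ∧ (T.Mtop h d).ncard = (T.Mtop h dp).ncard))
    {x y : V} (hx : T.IsLeaf x) (hy : T.IsLeaf y)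
    (hxy : T.topd h d x = T.topd h d y) : T.topd h dp x = T.topd h dp y := by
  have hxh : h - d ≤ T.hgt x := by rw [hh x hx]; linarith
  have hyh : h - d ≤ T.hgt y := by rw [hh y hy]; linarith
  have hxp : h - dp ≤ T.hgt x := by rw [hh x hx]; linarith
  have hyp : h - dp ≤ T.hgt y := by rw [hh y hy]; linarith
  rcases hcase with hle | ⟨hge, hc⟩
  · rw [← T.topd_topd hle hxh, ← T.topd_topd hle hyh, hxy]
  · apply T.topd_injOn_of_ncard_eq h hh hdp hge hc (T.topd_mem hxp).1 (T.topd_mem hyp).1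
    rw [T.topd_topd hge hxp, T.topd_topd hge hyp, hxy]

lemma ncard_image_le_sub_one {α β : Type*} [DecidableEq β] {S : Set α} {f : α → β} {a b : α}
    (ha : a ∈ S) (hb : b ∈ S) (hne : a ≠ b) (hf : f a = f b) (hfin : S.Finite) :
    (f '' S).ncard ≤ S.ncard - 1 := by
  have himg : f '' S = f '' (S \ {a}) := by
    ext z
    constructor
    · rintro ⟨w, hw, rfl⟩
      by_cases hwa : w = a
      · exact ⟨b, ⟨hb, by simp [hne.symm]⟩, by rw [← hf, hwa]⟩
      · exact ⟨w, ⟨hw, by simp [hwa]⟩, rfl⟩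
    · rintro ⟨w, hw, rfl⟩
      exact ⟨w, hw.1, rfl⟩
  rw [himg]
  calc (f '' (S \ {a})).ncard ≤ (S \ {a}).ncard := Set.ncard_image_le hfin.diff
    _ = S.ncard - 1 := Set.ncard_diff_singleton_of_mem ha

end PhyloTree


namespace PhyloTree

variable {V : Type} [Fintype V] [DecidableEq V] (T : PhyloTree V)

/-- a component top at a fine level is below the component top (at a coarser
level) of any common descendant. -/
lemma anc_of_mtop_anc {h d d' : ℝ} (hdd : d' ≤ d) {w u x : V}
    (hw : w ∈ T.Mtop h d) (hu : u ∈ T.Mtop h d') (hwx : T.anc w x) (hux : T.anc u x) :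
    T.anc w u := by
  rcases T.anc_comparable hwx hux with hc | hc
  · -- hc : T.anc u w
    rcases Relation.ReflTransGen.cases_head hc with hq | ⟨c, hstep, hrest⟩
    · exact hq ▸ Relation.ReflTransGen.refl
    · exfalso
      have h1 : T.hgt c < h - d := hw.2 c hstep
      have h2 : T.hgt u ≤ T.hgt c := T.hgt_le_of_anc hrest
      have h3 : h - d' ≤ T.hgt u := hu.1
      linarith
  · exact hc

lemma sum_le_sum_of_card_eq {α : Type*} [DecidableEq α] {s u : Finset α} {φ : α → ℝ}
    (hcard : s.card = u.card) (hle : ∀ p ∈ s, ∀ q ∈ u, φ p ≤ φ q) :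
    ∑ x ∈ s, φ x ≤ ∑ x ∈ u, φ x := by
  rcases s.eq_empty_or_nonempty with rfl | hs
  · have hu : u = ∅ := by
      rw [Finset.card_empty] at hcard
      exact Finset.card_eq_zero.mp hcard.symm
    simp [hu]
  · have hu : u.Nonempty := Finset.card_pos.mp (by rw [← hcard]; exact Finset.card_pos.mpr hs)
    calc ∑ x ∈ s, φ x ≤ ∑ _x ∈ s, u.inf' hu φ :=
          Finset.sum_le_sum fun p hp => Finset.le_inf' hu _ fun q hq => hle p hp q hq
      _ = s.card • u.inf' hu φ := by rw [Finset.sum_const]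
      _ = u.card • u.inf' hu φ := by rw [hcard]
      _ ≤ ∑ q ∈ u, φ q := Finset.card_nsmul_le_sum u φ _ fun q hq => Finset.inf'_le _ hq

end PhyloTree


/-- correctness of `MaximiseLinearSum`, Propositions 5 and 6
of the paper.  Let `T` be ultrametric and `1 ≤ k ≤ |X|`.  Suppose `A` is
obtained by the following construction: `P` consists of exactly one leaf from
each component `C` of `T[R(d_{k⁺})]`, chosen to maximise `φ` among the leaves
of `C`; then, for each component `C` of `T[R(d_{k⁻})]`, one element of `P` in
`C` maximising `φ` among the elements of `P` in `C` is placed in `A`; finally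
`A` is completed (within `P`) to size `k` using elements with the largest
`φ`-values among the remaining elements of `P`.  Then `A` is a size-`k` maxPD
set, and its `φ`-sum is at least that of every size-`k` maxPD set `B`. -/
theorem maximiseLinearSum_correct
    {V : Type} [Fintype V] [DecidableEq V] (T : PhyloTree V)
    (hU : T.Ultrametric) (φ : V → ℝ) (k : ℕ)
    (hk : 1 ≤ k) (hkn : k ≤ T.leaves.ncard)
    (P A₀ A : Set V)
    (hPleaves : P ⊆ T.leaves)
    -- `P` holds exactly one `φ`-maximal leaf from each short component:
    (hPshort : ∀ C ∈ T.components (T.R (T.branchDist (T.kplus k))),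
      ∃ x, P ∩ C = {x} ∧ ∀ y ∈ C ∩ T.leaves, φ y ≤ φ x)
    (hPonly : ∀ x ∈ P, ∃ C ∈ T.components (T.R (T.branchDist (T.kplus k))), x ∈ C)
    -- `A₀` holds exactly one element of `P` from each tall component,
    -- `φ`-maximal among the elements of `P` in that component:
    (hA₀P : A₀ ⊆ P)
    (hA₀tall : ∀ C ∈ T.components (T.R (T.branchDist (T.kminus k))),
      ∃ x, A₀ ∩ C = {x} ∧ ∀ y ∈ P ∩ C, φ y ≤ φ x)
    (hA₀only : ∀ x ∈ A₀, ∃ C ∈ T.components (T.R (T.branchDist (T.kminus k))), x ∈ C)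
    -- `A` extends `A₀` inside `P` to size `k`, using remaining elements of `P`
    -- with the largest `φ`-values:
    (hA₀A : A₀ ⊆ A) (hAP : A ⊆ P) (hAcard : A.ncard = k)
    (htop : ∀ q ∈ A \ A₀, ∀ p ∈ P \ A, φ p ≤ φ q) :
    T.IsMaxPD k A ∧
      ∀ B : Set V, T.IsMaxPD k B →
        ∑ x ∈ B.toFinite.toFinset, φ x ≤ ∑ x ∈ A.toFinite.toFinset, φ x := by
  classical
  obtain ⟨x₀, hx₀, -⟩ := T.exists_leaf_desc T.root
  set h := T.hgt x₀ with hh_def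
  have hh : ∀ x, T.IsLeaf x → T.hgt x = h := fun x hx => hU x x₀ hx hx₀
  have h0 : (0:ℝ) ≤ h := T.h_nonneg h hh
  -- facts about k⁻ and k⁺
  have hSm_ne : {j | j ≤ k ∧ T.IsBranchingValue j}.Nonempty := ⟨1, hk, T.branching_one h hh⟩
  have hSm_bdd : BddAbove {j | j ≤ k ∧ T.IsBranchingValue j} := ⟨k, fun j hj => hj.1⟩
  have hkm_mem : T.kminus k ∈ {j | j ≤ k ∧ T.IsBranchingValue j} := Nat.sSup_mem hSm_ne hSm_bdd
  have hkm_le : T.kminus k ≤ k := hkm_mem.1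
  have hkm_br : T.IsBranchingValue (T.kminus k) := hkm_mem.2
  have hkm_max : ∀ j, j ≤ k → T.IsBranchingValue j → j ≤ T.kminus k :=
    fun j h1 h2 => le_csSup hSm_bdd ⟨h1, h2⟩
  have hkm_ge1 : 1 ≤ T.kminus k := hkm_max 1 hk (T.branching_one h hh)
  have hSp_ne : {j | k ≤ j ∧ T.IsBranchingValue j}.Nonempty :=
    ⟨T.leaves.ncard, hkn, T.branching_card h hh⟩
  have hkp_mem : T.kplus k ∈ {j | k ≤ j ∧ T.IsBranchingValue j} := Nat.sInf_mem hSp_ne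
  have hkp_ge : k ≤ T.kplus k := hkp_mem.1
  have hkp_br : T.IsBranchingValue (T.kplus k) := hkp_mem.2
  set dm := T.branchDist (T.kminus k) with hdm_def
  set dp := T.branchDist (T.kplus k) with hdp_def
  obtain ⟨hdm0, hdmc, hdm_min⟩ := T.branchDist_spec h hh hkm_br
  obtain ⟨hdp0, hdpc, hdp_min⟩ := T.branchDist_spec h hh hkp_br
  have hdpdm : dp ≤ dm := by
    by_contra hcon
    push_neg at hcon
    have h1 : T.ccount dp ≤ T.ccount dm := T.ccount_antitone h hh hdm0 hcon.le
    rw [hdmc, hdpc] at h1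
    have heq : T.kminus k = T.kplus k := le_antisymm (hkm_le.trans hkp_ge) h1
    rw [hdm_def, hdp_def, heq] at hcon
    exact lt_irrefl _ hcon
  have hc_ge : ∀ d, 0 ≤ d → d < dm → T.kplus k ≤ T.ccount d := by
    intro d hd0 hlt
    have hbrd : T.IsBranchingValue (T.ccount d) := ⟨d, hd0, rfl⟩
    have hge_km : T.kminus k ≤ T.ccount d := by
      rw [← hdmc]; exact T.ccount_antitone h hh hd0 hlt.le
    by_cases hle : T.ccount d ≤ k
    · exfalso
      have h2 : T.ccount d = T.kminus k := le_antisymm (hkm_max _ hle hbrd) hge_km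
      have := hdm_min d hd0 h2
      linarith
    · exact Nat.sInf_le ⟨(not_le.mp hle).le, hbrd⟩
  have hc_le : ∀ d, dm ≤ d → T.ccount d ≤ T.kminus k := by
    intro d hd
    rw [← hdmc]; exact T.ccount_antitone h hh hdm0 hd
  have hAleaves : A ⊆ T.leaves := fun a ha => hPleaves (hAP ha)
  -- two elements of `P` with the same top at level `dp` coincide
  have hPsame : ∀ a1 ∈ P, ∀ a2 ∈ P, T.topd h dp a1 = T.topd h dp a2 → a1 = a2 := by
    intro a1 h1 a2 h2 heq
    have hl1 : T.IsLeaf a1 := hPleaves h1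
    have hl2 : T.IsLeaf a2 := hPleaves h2
    have hh1 : h - dp ≤ T.hgt a1 := by rw [hh a1 hl1]; linarith
    have hh2 : h - dp ≤ T.hgt a2 := by rw [hh a2 hl2]; linarith
    obtain ⟨hm1, ha1⟩ := T.topd_mem hh1
    obtain ⟨hm2, ha2⟩ := T.topd_mem hh2
    have hCmem : T.Dcomp h dp (T.topd h dp a1) ∈ T.components (T.R dp) := by
      rw [T.components_eq h hh hdp0]; exact ⟨_, hm1, rfl⟩
    obtain ⟨x, hxeq, -⟩ := hPshort _ hCmem
    have e1 : a1 ∈ P ∩ T.Dcomp h dp (T.topd h dp a1) := ⟨h1, hh1, ha1⟩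
    have e2 : a2 ∈ P ∩ T.Dcomp h dp (T.topd h dp a1) := ⟨h2, hh2, by rw [heq]; exact ha2⟩
    rw [hxeq, Set.mem_singleton_iff] at e1 e2
    rw [e1, e2]
  -- the crossing numbers of `A`
  have hNA : ∀ t ∈ T.hgtSet, 0 < t → T.NY h A t = min k ((T.Mtop h (h - t)).ncard) := by
    intro t ht htpos
    have hth : t ≤ h := by
      obtain ⟨v, -, rfl⟩ := Finset.mem_image.mp ht
      exact T.hgt_le_h h hh v
    have hd0 : (0:ℝ) ≤ h - t := by linarith
    by_cases hcase : dm ≤ h - t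
    · -- every component meets `A` via `A₀`
      have hmeets : ∀ w ∈ T.Mtop h (h - t), ∃ y ∈ A, T.IsLeaf y ∧ T.anc w y := by
        intro w hw
        obtain ⟨x, hx, hanc⟩ := T.exists_leaf_desc w
        have hxh : h - dm ≤ T.hgt x := by rw [hh x hx]; linarith
        obtain ⟨hum, hua⟩ := T.topd_mem hxh
        have hCmem : T.Dcomp h dm (T.topd h dm x) ∈ T.components (T.R dm) := by
          rw [T.components_eq h hh hdm0]; exact ⟨_, hum, rfl⟩
        obtain ⟨a, haeq, -⟩ := hA₀tall _ hCmem
        have haA : a ∈ A₀ ∩ T.Dcomp h dm (T.topd h dm x) := by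
          rw [haeq]; exact rfl
        have hwu : T.anc w (T.topd h dm x) := T.anc_of_mtop_anc hcase hw hum hanc hua
        refine ⟨a, hA₀A haA.1, hPleaves (hA₀P haA.1), ?_⟩
        exact Relation.ReflTransGen.trans haA.2.2 hwu
      have hseteq : {w | w ∈ T.Mtop h (h - t) ∧ ∃ y ∈ A, T.IsLeaf y ∧ T.anc w y} =
          T.Mtop h (h - t) := by
        ext w
        exact ⟨fun hw => hw.1, fun hw => ⟨hw, hmeets w hw⟩⟩
      rw [PhyloTree.NY, hseteq]
      refine (min_eq_right ?_).symm
      rw [← T.ccount_eq h hh hd0]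
      exact (hc_le _ hcase).trans hkm_le
    · push_neg at hcase
      have hinj : Set.InjOn (T.topd h (h - t)) A := by
        intro a1 h1 a2 h2 heq
        have hglue : T.topd h dp a1 = T.topd h dp a2 := by
          refine T.top_glue h hh hdp0 hd0 ?_ (hAleaves h1) (hAleaves h2) heq
          by_cases hldp : h - t ≤ dp
          · exact Or.inl hldp
          · refine Or.inr ⟨(not_le.mp hldp).le, ?_⟩
            rw [← T.ccount_eq h hh hd0, ← T.ccount_eq h hh hdp0, hdpc]
            refine le_antisymm ?_ (hc_ge _ hd0 hcase)
            rw [← hdpc]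
            exact T.ccount_antitone h hh hdp0 (not_le.mp hldp).le
        exact hPsame a1 (hAP h1) a2 (hAP h2) hglue
      rw [T.NY_eq_image h hh hAleaves hth, Set.ncard_image_of_injOn hinj, hAcard]
      refine (min_eq_left ?_).symm
      rw [← T.ccount_eq h hh hd0]
      exact hkp_ge.trans (hc_ge _ hd0 hcase)
  -- pointwise comparison of the level sums
  have hpoint : ∀ (Y : Set V), Y.ncard = k → ∀ t ∈ T.hgtSet,
      T.gap t * (T.NY h Y t : ℝ) ≤ T.gap t * (T.NY h A t : ℝ) := by
    intro Y hYc t ht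
    rcases eq_or_lt_of_le (T.hgtSet_nonneg ht) with rfl | htpos
    · rw [T.gap_zero]; simp
    · refine mul_le_mul_of_nonneg_left ?_ (T.gap_nonneg ht)
      have h1 : T.NY h Y t ≤ k := by rw [← hYc]; exact T.NY_le_ncard h Y t
      have h2 := T.NY_le_Mtop h Y t
      have h3 : T.NY h Y t ≤ T.NY h A t := by
        rw [hNA t ht htpos]; exact le_min h1 h2
      exact_mod_cast h3
  have hmaxA : T.IsMaxPD k A := by
    refine ⟨hAleaves, hAcard, fun Y hYl hYc => ?_⟩
    rw [T.PD_eq_levels h hh Y, T.PD_eq_levels h hh A]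
    exact Finset.sum_le_sum fun t ht => hpoint Y hYc t ht
  refine ⟨hmaxA, ?_⟩
  intro B hB
  obtain ⟨hBl, hBc, hBmax⟩ := hB
  have hPDeq : T.PD B = T.PD A := le_antisymm (hmaxA.2.2 B hBl hBc) (hBmax A hAleaves hAcard)
  have hstrict : ∀ t0 ∈ T.hgtSet, 0 < t0 → T.NY h B t0 < T.NY h A t0 → False := by
    intro t0 ht0 htpos hlt
    have h1 : T.PD B < T.PD A := by
      rw [T.PD_eq_levels h hh B, T.PD_eq_levels h hh A]
      refine Finset.sum_lt_sum (fun t ht => hpoint B hBc t ht) ⟨t0, ht0, ?_⟩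
      refine mul_lt_mul_of_pos_left ?_ (T.gap_pos ht0 htpos)
      exact_mod_cast hlt
    rw [hPDeq] at h1; exact lt_irrefl _ h1
  -- no two elements of B share a short component
  have hBsep : ∀ b1 ∈ B, ∀ b2 ∈ B, T.topd h dp b1 = T.topd h dp b2 → b1 = b2 := by
    intro b1 h1 b2 h2 heq
    by_contra hne
    have hkp2 : 2 ≤ T.kplus k := by
      by_contra hcon
      have hk1 : k = 1 := by omega
      obtain ⟨b, hbe⟩ := Set.ncard_eq_one.mp (by rw [hBc, hk1] : B.ncard = 1)
      rw [hbe, Set.mem_singleton_iff] at h1 h2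
      exact hne (h1.trans h2.symm)
    have hdplth : dp < h :=
      T.lt_h_of_ccount_ge_two h hh hdp0 (by rw [hdpc]; exact hkp2)
    have htp_mem : h - dp ∈ T.hgtSet := by
      rcases eq_or_lt_of_le hdp0 with heq0 | hpos
      · have he : h - dp = T.hgt x₀ := by
          rw [← hh_def]
          show h - T.branchDist (T.kplus k) = h
          linarith
        rw [he]; exact T.mem_hgtSet x₀
      · obtain ⟨u, hu⟩ := T.branchDist_breakpoint h hh hkp_br hpos
        have hueq : T.hgt u = h - dp := by
          show T.hgt u = h - T.branchDist (T.kplus k); linarith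
        rw [← hueq]; exact T.mem_hgtSet u
    refine hstrict (h - dp) htp_mem (by linarith) ?_
    have hsub : h - (h - dp) = dp := by ring
    have hNYA : T.NY h A (h - dp) = k := by
      rw [hNA _ htp_mem (by linarith), hsub, ← T.ccount_eq h hh hdp0, hdpc]
      exact min_eq_left hkp_ge
    have hNYB : T.NY h B (h - dp) ≤ k - 1 := by
      rw [T.NY_eq_image h hh hBl (by linarith), hsub]
      calc (T.topd h dp '' B).ncard ≤ B.ncard - 1 :=
            PhyloTree.ncard_image_le_sub_one h1 h2 hne heq (Set.toFinite _)
        _ = k - 1 := by rw [hBc]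
    rw [hNYA]
    omega
  -- B meets every tall component
  have hBmeet : ∀ w ∈ T.Mtop h dm, ∃ y ∈ B, T.anc w y := by
    intro w₀ hw₀
    by_contra hno
    push_neg at hno
    by_cases hkm2 : 2 ≤ T.kminus k
    · have hdmlth : dm < h :=
        T.lt_h_of_ccount_ge_two h hh hdm0 (by rw [hdmc]; exact hkm2)
      have htm_mem : h - dm ∈ T.hgtSet := by
        rcases eq_or_lt_of_le hdm0 with heq0 | hpos
        · have he : h - dm = T.hgt x₀ := by
            rw [← hh_def]
            show h - T.branchDist (T.kminus k) = h
            linarith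
          rw [he]; exact T.mem_hgtSet x₀
        · obtain ⟨u, hu⟩ := T.branchDist_breakpoint h hh hkm_br hpos
          have hueq : T.hgt u = h - dm := by
            show T.hgt u = h - T.branchDist (T.kminus k); linarith
          rw [← hueq]; exact T.mem_hgtSet u
      refine hstrict (h - dm) htm_mem (by linarith) ?_
      have hsub : h - (h - dm) = dm := by ring
      have hcard_pos : 1 ≤ (T.Mtop h dm).ncard := by
        rw [← T.ccount_eq h hh hdm0, hdmc]; exact hkm_ge1
      have hNYA : T.NY h A (h - dm) = (T.Mtop h dm).ncard := by
        rw [hNA _ htm_mem (by linarith), hsub]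
        refine min_eq_right ?_
        rw [← T.ccount_eq h hh hdm0, hdmc]
        exact hkm_le
      have hNYB : T.NY h B (h - dm) ≤ (T.Mtop h dm).ncard - 1 := by
        rw [PhyloTree.NY]
        simp only [hsub]
        have hsub2 : {w | w ∈ T.Mtop h dm ∧ ∃ y ∈ B, T.IsLeaf y ∧ T.anc w y} ⊆
            T.Mtop h dm \ {w₀} := by
          rintro w ⟨hw, y, hy, -, hanc⟩
          refine ⟨hw, ?_⟩
          simp only [Set.mem_singleton_iff]
          rintro rfl
          exact hno y hy hanc
        calc {w | w ∈ T.Mtop h dm ∧ ∃ y ∈ B, T.IsLeaf y ∧ T.anc w y}.ncard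
            ≤ (T.Mtop h dm \ {w₀}).ncard := Set.ncard_le_ncard hsub2 (Set.toFinite _)
          _ = (T.Mtop h dm).ncard - 1 :=
              Set.ncard_diff_singleton_of_mem hw₀
      rw [hNYA]
      omega
    · have hkm1 : T.kminus k = 1 := by omega
      have hcard1 : (T.Mtop h dm).ncard = 1 := by
        rw [← T.ccount_eq h hh hdm0, hdmc, hkm1]
      obtain ⟨w', hw'⟩ := Set.ncard_eq_one.mp hcard1
      have hBne : B.Nonempty := by
        rw [← Set.ncard_pos (Set.toFinite _), hBc]; omega
      obtain ⟨b, hb⟩ := hBne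
      have hbl : T.IsLeaf b := hBl hb
      have hbh : h - dm ≤ T.hgt b := by rw [hh b hbl]; linarith
      obtain ⟨hm, ha⟩ := T.topd_mem hbh
      have e1 : T.topd h dm b = w' := by rw [hw'] at hm; exact hm
      have e2 : w₀ = w' := by rw [hw'] at hw₀; exact hw₀
      refine hno b hb ?_
      rw [e2, ← e1]
      exact ha
  -- representative choice for short components
  have hrep_ex : ∀ w, ∃ x, (w ∈ T.Mtop h dp →
      (P ∩ T.Dcomp h dp w = {x} ∧ ∀ y ∈ T.Dcomp h dp w ∩ T.leaves, φ y ≤ φ x)) := by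
    intro w
    by_cases hw : w ∈ T.Mtop h dp
    · have hCmem : T.Dcomp h dp w ∈ T.components (T.R dp) := by
        rw [T.components_eq h hh hdp0]; exact ⟨w, hw, rfl⟩
      obtain ⟨x, hx1, hx2⟩ := hPshort _ hCmem
      exact ⟨x, fun _ => ⟨hx1, hx2⟩⟩
    · exact ⟨w, fun hq => absurd hq hw⟩
  choose rep hrep using hrep_ex
  have hrepP : ∀ w, w ∈ T.Mtop h dp → rep w ∈ P ∩ T.Dcomp h dp w := by
    intro w hw
    have h1 := (hrep w hw).1
    have h2 : rep w ∈ ({rep w} : Set V) := rfl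
    rw [← h1] at h2
    exact h2
  have hbtop : ∀ b ∈ B, h - dp ≤ T.hgt b := by
    intro b hb
    rw [hh b (hBl hb)]; linarith
  have hpP : ∀ b ∈ B, rep (T.topd h dp b) ∈ P ∧
      T.anc (T.topd h dp b) (rep (T.topd h dp b)) ∧ φ b ≤ φ (rep (T.topd h dp b)) := by
    intro b hb
    obtain ⟨hm, ha⟩ := T.topd_mem (hbtop b hb)
    have h1 := hrepP _ hm
    exact ⟨h1.1, h1.2.2, (hrep _ hm).2 b ⟨⟨hbtop b hb, ha⟩, hBl hb⟩⟩
  set p : V → V := fun b => rep (T.topd h dp b) with hp_def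
  have hp_inj : ∀ b1 ∈ B, ∀ b2 ∈ B, p b1 = p b2 → b1 = b2 := by
    intro b1 h1 b2 h2 heq
    obtain ⟨hm1, ha1⟩ := T.topd_mem (hbtop b1 h1)
    obtain ⟨hm2, ha2⟩ := T.topd_mem (hbtop b2 h2)
    have e1 := (hrepP _ hm1).2
    have e2 := (hrepP _ hm2).2
    have htopeq : T.topd h dp b1 = T.topd h dp b2 := by
      refine T.mtop_eq_of_anc hm1 hm2 e1.2 ?_
      rw [show rep (T.topd h dp b1) = rep (T.topd h dp b2) from heq]
      exact e2.2
    exact hBsep b1 h1 b2 h2 htopeq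
  set Bf := B.toFinite.toFinset with hBf_def
  set Af := A.toFinite.toFinset with hAf_def
  have hBfc : Bf.card = k := by
    rw [hBf_def, ← Set.ncard_eq_toFinset_card B B.toFinite, hBc]
  have hAfc : Af.card = k := by
    rw [hAf_def, ← Set.ncard_eq_toFinset_card A A.toFinite, hAcard]
  have hp_injf : ∀ b1 ∈ Bf, ∀ b2 ∈ Bf, p b1 = p b2 → b1 = b2 := by
    intro b1 h1 b2 h2 heq
    exact hp_inj b1 (B.toFinite.mem_toFinset.mp h1) b2 (B.toFinite.mem_toFinset.mp h2) heq
  set Qf := Bf.image p with hQf_def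
  have hQfc : Qf.card = k := by
    rw [hQf_def, Finset.card_image_of_injOn
      (fun a ha b hb heq => hp_injf a (by simpa using ha) b (by simpa using hb) heq), hBfc]
  have hsum1 : ∑ x ∈ Bf, φ x ≤ ∑ x ∈ Qf, φ x := by
    rw [hQf_def, Finset.sum_image hp_injf]
    exact Finset.sum_le_sum fun b hb => (hpP b (B.toFinite.mem_toFinset.mp hb)).2.2
  set Mf := (T.Mtop h dm).toFinite.toFinset with hMf_def
  have hMfc : Mf.card = T.kminus k := by
    rw [hMf_def, ← Set.ncard_eq_toFinset_card _ (T.Mtop h dm).toFinite,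
      ← T.ccount_eq h hh hdm0, hdmc]
  have ha0_ex : ∀ w, ∃ x, (w ∈ T.Mtop h dm →
      (A₀ ∩ T.Dcomp h dm w = {x} ∧ ∀ y ∈ P ∩ T.Dcomp h dm w, φ y ≤ φ x)) := by
    intro w
    by_cases hw : w ∈ T.Mtop h dm
    · have hCmem : T.Dcomp h dm w ∈ T.components (T.R dm) := by
        rw [T.components_eq h hh hdm0]; exact ⟨w, hw, rfl⟩
      obtain ⟨x, hx1, hx2⟩ := hA₀tall _ hCmem
      exact ⟨x, fun _ => ⟨hx1, hx2⟩⟩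
    · exact ⟨w, fun hq => absurd hq hw⟩
  choose a0 ha0 using ha0_ex
  have ha0mem : ∀ w, w ∈ T.Mtop h dm → a0 w ∈ A₀ ∩ T.Dcomp h dm w := by
    intro w hw
    have h1 := (ha0 w hw).1
    have h2 : a0 w ∈ ({a0 w} : Set V) := rfl
    rw [← h1] at h2
    exact h2
  have hA0eq : A₀ = a0 '' (T.Mtop h dm) := by
    ext x
    constructor
    · intro hx
      obtain ⟨C, hC, hxC⟩ := hA₀only x hx
      rw [T.components_eq h hh hdm0] at hC
      obtain ⟨w, hw, rfl⟩ := hC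
      have hmem : x ∈ A₀ ∩ T.Dcomp h dm w := ⟨hx, hxC⟩
      rw [(ha0 w hw).1, Set.mem_singleton_iff] at hmem
      exact ⟨w, hw, hmem.symm⟩
    · rintro ⟨w, hw, rfl⟩
      exact (ha0mem w hw).1
  have ha0_injf : ∀ w1 ∈ Mf, ∀ w2 ∈ Mf, a0 w1 = a0 w2 → w1 = w2 := by
    intro w1 h1 w2 h2 heq
    have m1 := (T.Mtop h dm).toFinite.mem_toFinset.mp h1
    have m2 := (T.Mtop h dm).toFinite.mem_toFinset.mp h2
    refine T.mtop_eq_of_anc m1 m2 (ha0mem w1 m1).2.2 ?_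
    rw [heq]
    exact (ha0mem w2 m2).2.2
  set A0f := A₀.toFinite.toFinset with hA0f_def
  have hA0f_eq : A0f = Mf.image a0 := by
    ext x
    rw [hA0f_def, Set.Finite.mem_toFinset, hA0eq, Finset.mem_image]
    constructor
    · rintro ⟨w, hw, rfl⟩
      exact ⟨w, (T.Mtop h dm).toFinite.mem_toFinset.mpr hw, rfl⟩
    · rintro ⟨w, hw, rfl⟩
      exact ⟨w, (T.Mtop h dm).toFinite.mem_toFinset.mp hw, rfl⟩
  have hA0fc : A0f.card = T.kminus k := by
    rw [hA0f_eq, Finset.card_image_of_injOn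
      (fun a ha b hb heq => ha0_injf a (by simpa using ha) b (by simpa using hb) heq), hMfc]
  have hA0fsubA : A0f ⊆ Af := by
    intro x hx
    rw [hA0f_def, Set.Finite.mem_toFinset] at hx
    rw [hAf_def, Set.Finite.mem_toFinset]
    exact hA₀A hx
  have hQmeet : ∀ w ∈ T.Mtop h dm, ∃ q ∈ Qf, q ∈ T.Dcomp h dm w := by
    intro w hw
    obtain ⟨y, hy, hanc⟩ := hBmeet w hw
    obtain ⟨hm, ha⟩ := T.topd_mem (hbtop y hy)
    have hq := hrepP _ hm
    have hwu : T.anc w (T.topd h dp y) := T.anc_of_mtop_anc hdpdm hw hm hanc ha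
    have hancq : T.anc w (p y) := Relation.ReflTransGen.trans hq.2.2 hwu
    refine ⟨p y, Finset.mem_image_of_mem p (B.toFinite.mem_toFinset.mpr hy), ?_, hancq⟩
    rw [hh (p y) (hPleaves hq.1)]
    linarith
  have hQfsubP : ∀ q ∈ Qf, q ∈ P := by
    intro q hq
    obtain ⟨b, hb, rfl⟩ := Finset.mem_image.mp hq
    exact (hpP b (B.toFinite.mem_toFinset.mp hb)).1
  have hq0_ex : ∀ w, ∃ q, (w ∈ T.Mtop h dm →
      (q ∈ Qf ∧ q ∈ T.Dcomp h dm w ∧ (a0 w ∈ Qf → q = a0 w))) := by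
    intro w
    by_cases hw : w ∈ T.Mtop h dm
    · by_cases haq : a0 w ∈ Qf
      · exact ⟨a0 w, fun _ => ⟨haq, (ha0mem w hw).2, fun _ => rfl⟩⟩
      · obtain ⟨q, hq1, hq2⟩ := hQmeet w hw
        exact ⟨q, fun _ => ⟨hq1, hq2, fun hc => absurd hc haq⟩⟩
    · exact ⟨w, fun hq => absurd hq hw⟩
  choose q0 hq0 using hq0_ex
  have hq0_injf : ∀ w1 ∈ Mf, ∀ w2 ∈ Mf, q0 w1 = q0 w2 → w1 = w2 := by
    intro w1 h1 w2 h2 heq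
    have m1 := (T.Mtop h dm).toFinite.mem_toFinset.mp h1
    have m2 := (T.Mtop h dm).toFinite.mem_toFinset.mp h2
    refine T.mtop_eq_of_anc m1 m2 (hq0 w1 m1).2.1.2 ?_
    rw [heq]
    exact (hq0 w2 m2).2.1.2
  set QTf := Mf.image q0 with hQTf_def
  have hQT_sub : QTf ⊆ Qf := by
    intro x hx
    obtain ⟨w, hw, rfl⟩ := Finset.mem_image.mp hx
    exact (hq0 w ((T.Mtop h dm).toFinite.mem_toFinset.mp hw)).1
  have hQTc : QTf.card = T.kminus k := by
    rw [hQTf_def, Finset.card_image_of_injOn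
      (fun a ha b hb heq => hq0_injf a (by simpa using ha) b (by simpa using hb) heq), hMfc]
  have hsum2 : ∑ x ∈ QTf, φ x ≤ ∑ x ∈ A0f, φ x := by
    rw [hQTf_def, Finset.sum_image hq0_injf, hA0f_eq, Finset.sum_image ha0_injf]
    refine Finset.sum_le_sum fun w hw' => ?_
    have hw := (T.Mtop h dm).toFinite.mem_toFinset.mp hw'
    exact (ha0 w hw).2 (q0 w) ⟨hQfsubP _ (hq0 w hw).1, (hq0 w hw).2.1⟩
  set Sf := Qf \ QTf with hSf_def
  have hScard : Sf.card = k - T.kminus k := by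
    rw [hSf_def, Finset.card_sdiff_of_subset hQT_sub, hQfc, hQTc]
  have hADcard : (Af \ A0f).card = k - T.kminus k := by
    rw [Finset.card_sdiff_of_subset hA0fsubA, hAfc, hA0fc]
  have hSnotA0 : ∀ x ∈ Sf, x ∉ A0f := by
    intro x hx hxA0
    obtain ⟨hxQ, hxnQT⟩ := Finset.mem_sdiff.mp hx
    have hxA0' : x ∈ A₀ := by
      rw [hA0f_def, Set.Finite.mem_toFinset] at hxA0; exact hxA0
    rw [hA0eq] at hxA0'
    obtain ⟨w, hw, rfl⟩ := hxA0'
    have heq := (hq0 w hw).2.2 hxQ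
    apply hxnQT
    rw [hQTf_def]
    have hmem : q0 w ∈ Mf.image q0 :=
      Finset.mem_image_of_mem q0 ((T.Mtop h dm).toFinite.mem_toFinset.mpr hw)
    rwa [heq] at hmem
  have hS1sub : Sf ∩ Af ⊆ Af \ A0f := by
    intro x hx
    obtain ⟨h1, h2⟩ := Finset.mem_inter.mp hx
    exact Finset.mem_sdiff.mpr ⟨h2, hSnotA0 x h1⟩
  have hswap : ∑ x ∈ Sf, φ x ≤ ∑ x ∈ Af \ A0f, φ x := by
    have hs1 : ∑ x ∈ Sf, φ x = ∑ x ∈ Sf ∩ Af, φ x + ∑ x ∈ Sf \ Af, φ x :=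
      (Finset.sum_inter_add_sum_sdiff Sf Af φ).symm
    have hs2 : ∑ x ∈ Af \ A0f, φ x =
        ∑ x ∈ (Af \ A0f) \ (Sf ∩ Af), φ x + ∑ x ∈ Sf ∩ Af, φ x :=
      (Finset.sum_sdiff hS1sub).symm
    have hcc : (Sf \ Af).card = ((Af \ A0f) \ (Sf ∩ Af)).card := by
      have e1 : (Sf \ Af).card + (Sf ∩ Af).card = Sf.card :=
        Finset.card_sdiff_add_card_inter Sf Af
      have e2 : ((Af \ A0f) \ (Sf ∩ Af)).card = (Af \ A0f).card - (Sf ∩ Af).card :=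
        Finset.card_sdiff_of_subset hS1sub
      have e3 : (Sf ∩ Af).card ≤ (Af \ A0f).card := Finset.card_le_card hS1sub
      omega
    have hkey : ∀ p' ∈ Sf \ Af, ∀ q' ∈ (Af \ A0f) \ (Sf ∩ Af), φ p' ≤ φ q' := by
      intro p' hp' q' hq'
      obtain ⟨hp1, hp2⟩ := Finset.mem_sdiff.mp hp'
      have hq1 := (Finset.mem_sdiff.mp hq').1
      obtain ⟨hqA, hqA0⟩ := Finset.mem_sdiff.mp hq1
      refine htop q' ⟨?_, ?_⟩ p' ⟨?_, ?_⟩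
      · rw [hAf_def, Set.Finite.mem_toFinset] at hqA; exact hqA
      · intro hc; exact hqA0 (by rw [hA0f_def, Set.Finite.mem_toFinset]; exact hc)
      · exact hQfsubP p' (Finset.mem_sdiff.mp hp1).1
      · intro hc; exact hp2 (by rw [hAf_def, Set.Finite.mem_toFinset]; exact hc)
    rw [hs1, hs2]
    have := PhyloTree.sum_le_sum_of_card_eq (φ := φ) hcc hkey
    linarith
  calc ∑ x ∈ Bf, φ x ≤ ∑ x ∈ Qf, φ x := hsum1
    _ = ∑ x ∈ Sf, φ x + ∑ x ∈ QTf, φ x := by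
        rw [hSf_def]; exact (Finset.sum_sdiff hQT_sub).symm
    _ ≤ ∑ x ∈ Af \ A0f, φ x + ∑ x ∈ A0f, φ x := add_le_add hswap hsum2
    _ = ∑ x ∈ Af, φ x := Finset.sum_sdiff hA0fsubA
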